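/- arXiv:1708.06028 — 5 statements merged into one kernel-verified Lean document; each statement's English description precedes it below -/
import Mathlib

section
/- The tanh-sinh transformation ψ(z) = tanh((π/2)·sinh z) is bounded on the strip D_d: for every d with 0 < d < π/2 there exists a constant M > 0 such that |ψ(z)| ≤ M for all complex z with |Im z| < d. -/
open Real Complex

lemma sinh_re' (x y : ℝ) : (Complex.sinh (x + y * I)).re = Real.sinh x * Real.cos y := by
  rw [Complex.sinh_add, Complex.cosh_mul_I, Complex.sinh_mul_I]
  simp [← Complex.ofReal_sinh, ← Complex.ofReal_cosh, ← Complex.ofReal_cos, ← Complex.ofReal_sin]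

lemma sinh_im' (x y : ℝ) : (Complex.sinh (x + y * I)).im = Real.cosh x * Real.sin y := by
  rw [Complex.sinh_add, Complex.cosh_mul_I, Complex.sinh_mul_I]
  simp [← Complex.ofReal_sinh, ← Complex.ofReal_cosh, ← Complex.ofReal_cos, ← Complex.ofReal_sin]

lemma abs_cosh_sq' (w : ℂ) :
    ‖Complex.cosh w‖^2 = Real.sinh w.re ^ 2 + Real.cos w.im ^ 2 := by
  rw [Complex.sq_norm, Complex.normSq_apply]
  have h1 : (Complex.cosh w).re = Real.cosh w.re * Real.cos w.im := by
    conv_lhs => rw [← Complex.re_add_im w]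
    rw [Complex.cosh_add, Complex.cosh_mul_I, Complex.sinh_mul_I]
    simp [← Complex.ofReal_sinh, ← Complex.ofReal_cosh, ← Complex.ofReal_cos, ← Complex.ofReal_sin]
  have h2 : (Complex.cosh w).im = Real.sinh w.re * Real.sin w.im := by
    conv_lhs => rw [← Complex.re_add_im w]
    rw [Complex.cosh_add, Complex.cosh_mul_I, Complex.sinh_mul_I]
    simp [← Complex.ofReal_sinh, ← Complex.ofReal_cosh, ← Complex.ofReal_cos, ← Complex.ofReal_sin]
  have h3 := Real.sin_sq_add_cos_sq w.im
  have h4 := Real.cosh_sq w.re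
  rw [h1, h2]; nlinarith

lemma abs_sinh_sq' (w : ℂ) :
    ‖Complex.sinh w‖^2 = Real.sinh w.re ^ 2 + Real.sin w.im ^ 2 := by
  rw [Complex.sq_norm, Complex.normSq_apply]
  have h1 : (Complex.sinh w).re = Real.sinh w.re * Real.cos w.im := by
    conv_lhs => rw [← Complex.re_add_im w]
    exact sinh_re' w.re w.im
  have h2 : (Complex.sinh w).im = Real.cosh w.re * Real.sin w.im := by
    conv_lhs => rw [← Complex.re_add_im w]
    exact sinh_im' w.re w.im
  have h3 := Real.sin_sq_add_cos_sq w.im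
  have h4 := Real.cosh_sq w.re
  rw [h1, h2]; nlinarith

lemma w_re' (z : ℂ) : ((π / 2 : ℂ) * Complex.sinh z).re
    = π / 2 * (Real.sinh z.re * Real.cos z.im) := by
  have h : Complex.sinh z = Complex.sinh (z.re + z.im * I) := by rw [Complex.re_add_im]
  rw [h, Complex.mul_re, sinh_re', sinh_im']
  simp

lemma w_im' (z : ℂ) : ((π / 2 : ℂ) * Complex.sinh z).im
    = π / 2 * (Real.cosh z.re * Real.sin z.im) := by
  have h : Complex.sinh z = Complex.sinh (z.re + z.im * I) := by rw [Complex.re_add_im]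
  rw [h, Complex.mul_im, sinh_re', sinh_im']
  simp

lemma sinh_abs' (x : ℝ) : Real.sinh |x| = |Real.sinh x| := by
  rcases abs_cases x with ⟨h, h0⟩ | ⟨h, h0⟩
  · rw [h, _root_.abs_of_nonneg (Real.sinh_nonneg_iff.2 h0)]
  · rw [h, Real.sinh_neg, _root_.abs_of_nonpos (Real.sinh_nonpos_iff.2 h0.le)]

/-- The tanh-sinh transformation `ψ(z) = tanh((π/2)·sinh z)` is bounded on the strip
`D_d = {z : |Im z| < d}` for every `0 < d < π/2`. -/
theorem tanh_sinh_bounded_on_strip (d : ℝ) (hd0 : 0 < d) (hd : d < π / 2) :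
    ∃ M : ℝ, 0 < M ∧ ∀ z : ℂ, |z.im| < d →
      ‖Complex.tanh ((π / 2 : ℂ) * Complex.sinh z)‖ ≤ M := by
  have hπ : (0:ℝ) < π := Real.pi_pos
  have hcosd : 0 < Real.cos d := Real.cos_pos_of_mem_Ioo ⟨by linarith, hd⟩
  set u₀ : ℝ := π / 2 * Real.sinh 1 * Real.cos d with hu₀def
  have hu₀ : 0 < u₀ := by
    have h1 : 0 < Real.sinh 1 := Real.sinh_pos_iff.2 one_pos
    positivity
  have hs₀ : 0 < Real.sinh u₀ := Real.sinh_pos_iff.2 hu₀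
  set K : Set ℂ := Set.Icc (-1 : ℝ) 1 ×ℂ Set.Icc (-d) d with hKdef
  have hKc : IsCompact K :=
    Metric.isCompact_of_isClosed_isBounded (IsClosed.reProdIm isClosed_Icc isClosed_Icc)
      (Bornology.IsBounded.reProdIm (Metric.isBounded_Icc (-1) 1) (Metric.isBounded_Icc (-d) d))
  -- cosh ((π/2) sinh z) ≠ 0 on K
  have hne : ∀ z ∈ K, Complex.cosh ((π / 2 : ℂ) * Complex.sinh z) ≠ 0 := by
    intro z hz h0
    obtain ⟨hre, him⟩ := hz
    set w : ℂ := (π / 2 : ℂ) * Complex.sinh z with hw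
    have hsum : Real.sinh w.re ^ 2 + Real.cos w.im ^ 2 = 0 := by
      rw [← abs_cosh_sq' w, h0]; simp
    have h1 : Real.sinh w.re = 0 := by
      nlinarith [sq_nonneg (Real.sinh w.re), sq_nonneg (Real.cos w.im)]
    have h2 : Real.cos w.im = 0 := by
      nlinarith [sq_nonneg (Real.sinh w.re), sq_nonneg (Real.cos w.im)]
    have hwre0 : w.re = 0 := Real.sinh_eq_zero.1 h1
    have hzim1 : -d ≤ z.im := him.1
    have hzim2 : z.im ≤ d := him.2
    have hcoszim : 0 < Real.cos z.im :=
      Real.cos_pos_of_mem_Ioo ⟨by linarith, by linarith⟩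
    have hzre0 : Real.sinh z.re = 0 := by
      by_contra h
      have hne0 : w.re ≠ 0 := by
        rw [w_re' z]
        exact mul_ne_zero (by positivity) (mul_ne_zero h (ne_of_gt hcoszim))
      exact hne0 hwre0
    have hzre : z.re = 0 := Real.sinh_eq_zero.1 hzre0
    have hwim : |w.im| < π / 2 := by
      rw [w_im' z, hzre, Real.cosh_zero, one_mul]
      have habs : |Real.sin z.im| < 1 := by
        have hzable : |z.im| ≤ d := abs_le.2 ⟨hzim1, hzim2⟩
        have h5 : Real.sin |z.im| < Real.sin (π / 2) := by
          apply Real.strictMonoOn_sin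
            ⟨by linarith [abs_nonneg z.im], by linarith [lt_of_le_of_lt hzable hd]⟩
            ⟨by linarith, le_refl _⟩
          exact lt_of_le_of_lt hzable hd
        rw [Real.sin_pi_div_two] at h5
        have h6 : |Real.sin z.im| = Real.sin |z.im| := by
          rcases abs_cases z.im with ⟨ha, hb⟩ | ⟨ha, hb⟩
          · rw [ha, _root_.abs_of_nonneg
              (Real.sin_nonneg_of_nonneg_of_le_pi (by linarith) (by linarith))]
          · have h7 : 0 ≤ Real.sin (-z.im) :=
              Real.sin_nonneg_of_nonneg_of_le_pi (by linarith) (by linarith)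
            rw [ha, Real.sin_neg]
            rw [Real.sin_neg] at h7
            exact _root_.abs_of_nonpos (by linarith)
        rw [h6]; exact h5
      rw [abs_mul, _root_.abs_of_pos (by positivity : (0:ℝ) < π/2)]
      nlinarith [abs_nonneg (Real.sin z.im)]
    have hcw : 0 < Real.cos w.im := by
      rcases abs_lt.1 hwim with ⟨ha, hb⟩
      exact Real.cos_pos_of_mem_Ioo ⟨ha, hb⟩
    linarith
  -- bound on K by compactness
  have hKne : K.Nonempty := ⟨0, ⟨by simp, by simp [hd0.le]⟩⟩
  have hcont : ContinuousOn
      (fun z => ‖Complex.tanh ((π / 2 : ℂ) * Complex.sinh z)‖) K := by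
    have heq : ∀ z ∈ K, ‖Complex.tanh ((π / 2 : ℂ) * Complex.sinh z)‖
        = ‖Complex.sinh ((π / 2 : ℂ) * Complex.sinh z)‖
          / ‖Complex.cosh ((π / 2 : ℂ) * Complex.sinh z)‖ := by
      intro z hz
      rw [Complex.tanh_eq_sinh_div_cosh, norm_div]
    apply ContinuousOn.congr _ heq
    apply ContinuousOn.div
    · exact (continuous_norm.comp (Complex.continuous_sinh.comp
        ((continuous_const.mul Complex.continuous_sinh)))).continuousOn
    · exact (continuous_norm.comp (Complex.continuous_cosh.comp
        ((continuous_const.mul Complex.continuous_sinh)))).continuousOn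
    · intro z hz
      simpa using hne z hz
  obtain ⟨z₀, hz₀K, hmax⟩ := hKc.exists_isMaxOn hKne hcont
  set B : ℝ := Real.sqrt (1 + 1 / Real.sinh u₀ ^ 2) with hBdef
  refine ⟨max (max (‖Complex.tanh ((π / 2 : ℂ) * Complex.sinh z₀)‖) B) 1,
    lt_of_lt_of_le one_pos (le_max_right _ _), ?_⟩
  intro z hzim
  rcases le_or_gt |z.re| 1 with hre | hre
  · -- z ∈ K
    have hzK : z ∈ K := by
      rcases abs_le.1 hre with ⟨h1, h2⟩
      rcases abs_lt.1 hzim with ⟨h3, h4⟩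
      exact ⟨⟨h1, h2⟩, ⟨h3.le, h4.le⟩⟩
    exact le_trans (hmax hzK) (le_trans (le_max_left _ _) (le_max_left _ _))
  · -- |z.re| > 1 : use the explicit estimate
    set w : ℂ := (π / 2 : ℂ) * Complex.sinh z with hw
    have hzim1 : -d < z.im := (abs_lt.1 hzim).1
    have hzim2 : z.im < d := (abs_lt.1 hzim).2
    have hcosz : Real.cos d ≤ Real.cos z.im := by
      have h1 : Real.cos d ≤ Real.cos |z.im| :=
        Real.cos_le_cos_of_nonneg_of_le_pi (abs_nonneg _) (by linarith) (abs_lt.2 ⟨hzim1, hzim2⟩).le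
      rwa [Real.cos_abs] at h1
    have hcosz0 : 0 < Real.cos z.im := lt_of_lt_of_le hcosd hcosz
    have hsinhz : Real.sinh 1 ≤ |Real.sinh z.re| := by
      rw [← sinh_abs' z.re]
      exact Real.sinh_le_sinh.2 hre.le
    have hwre : u₀ ≤ |w.re| := by
      rw [hw, w_re' z, abs_mul, abs_mul, _root_.abs_of_pos (by positivity : (0:ℝ) < π/2),
        _root_.abs_of_pos hcosz0]
      have hs1 : 0 < Real.sinh 1 := Real.sinh_pos_iff.2 one_pos
      calc u₀ = π/2 * Real.sinh 1 * Real.cos d := rfl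
        _ ≤ π/2 * |Real.sinh z.re| * Real.cos z.im := by
            apply mul_le_mul (by nlinarith) hcosz hcosd.le
            positivity
        _ = π/2 * (|Real.sinh z.re| * Real.cos z.im) := by ring
    have hs2 : Real.sinh u₀ ^ 2 ≤ Real.sinh w.re ^ 2 := by
      have h1 : Real.sinh u₀ ≤ |Real.sinh w.re| := by
        rw [← sinh_abs' w.re, ← Real.sinh_le_sinh] at *
        exact Real.sinh_le_sinh.2 hwre
      calc Real.sinh u₀ ^ 2 ≤ |Real.sinh w.re| ^ 2 := by nlinarith
        _ = Real.sinh w.re ^ 2 := sq_abs _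
    have hD : 0 < Real.sinh w.re ^ 2 + Real.cos w.im ^ 2 := by
      nlinarith [sq_nonneg (Real.cos w.im)]
    have hsq : ‖Complex.tanh w‖^2 ≤ 1 + 1 / Real.sinh u₀ ^ 2 := by
      rw [Complex.tanh_eq_sinh_div_cosh, norm_div, div_pow, abs_sinh_sq', abs_cosh_sq']
      rw [div_le_iff₀ hD]
      have hsin : Real.sin w.im ^ 2 ≤ 1 := Real.sin_sq_le_one w.im
      have hcos : 0 ≤ Real.cos w.im ^ 2 := sq_nonneg _
      have hs₀2 : 0 < Real.sinh u₀ ^ 2 := by positivity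
      have key : (1 + 1 / Real.sinh u₀ ^ 2) * (Real.sinh w.re ^ 2 + Real.cos w.im ^ 2)
          = Real.sinh w.re ^ 2 + Real.cos w.im ^ 2
            + (Real.sinh w.re ^ 2 + Real.cos w.im ^ 2) / Real.sinh u₀ ^ 2 := by ring
      rw [key]
      have hge : 1 ≤ (Real.sinh w.re ^ 2 + Real.cos w.im ^ 2) / Real.sinh u₀ ^ 2 := by
        rw [le_div_iff₀ hs₀2]; nlinarith
      linarith
    have hB : ‖Complex.tanh w‖ ≤ B := by
      rw [hBdef, Real.le_sqrt (norm_nonneg _) (by positivity)]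
      exact hsq
    exact le_trans hB (le_trans (le_max_right _ _) (le_max_left _ _))
end

section
/- (Lemma) The tanh-sinh transformation ψ(z) = tanh((π/2)·sinh z) is Lipschitz continuous on the strip D_d whenever 0 < d < π/2: there exists a constant L > 0 such that |ψ(z) − ψ(w)| ≤ L·|z − w| for all z, w with |Im z| < d and |Im w| < d. -/
open Real Complex

private lemma cosh_decomp (z : ℂ) : Complex.cosh z =
    ((Real.cosh z.re * Real.cos z.im : ℝ) : ℂ)
      + ((Real.sinh z.re * Real.sin z.im : ℝ) : ℂ) * Complex.I := by
  conv_lhs => rw [← Complex.re_add_im z]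
  rw [Complex.cosh_add, Complex.cosh_mul_I, Complex.sinh_mul_I]
  push_cast
  ring

private lemma cosh_re' (z : ℂ) :
    (Complex.cosh z).re = Real.cosh z.re * Real.cos z.im := by
  rw [cosh_decomp]
  simp [Complex.cos_ofReal_re, Complex.sin_ofReal_re, Complex.cosh_ofReal_re,
    Complex.sinh_ofReal_re, Complex.cos_ofReal_im, Complex.sin_ofReal_im,
    Complex.cosh_ofReal_im, Complex.sinh_ofReal_im]

private lemma cosh_im' (z : ℂ) :
    (Complex.cosh z).im = Real.sinh z.re * Real.sin z.im := by
  rw [cosh_decomp]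
  simp [Complex.cos_ofReal_re, Complex.sin_ofReal_re, Complex.cosh_ofReal_re,
    Complex.sinh_ofReal_re, Complex.cos_ofReal_im, Complex.sin_ofReal_im,
    Complex.cosh_ofReal_im, Complex.sinh_ofReal_im]

private lemma sinh_decomp (z : ℂ) : Complex.sinh z =
    ((Real.sinh z.re * Real.cos z.im : ℝ) : ℂ)
      + ((Real.cosh z.re * Real.sin z.im : ℝ) : ℂ) * Complex.I := by
  conv_lhs => rw [← Complex.re_add_im z]
  rw [Complex.sinh_add, Complex.cosh_mul_I, Complex.sinh_mul_I]
  push_cast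
  ring

private lemma sinh_re'_s3 (z : ℂ) :
    (Complex.sinh z).re = Real.sinh z.re * Real.cos z.im := by
  rw [sinh_decomp]
  simp [Complex.cos_ofReal_re, Complex.sin_ofReal_re, Complex.cosh_ofReal_re,
    Complex.sinh_ofReal_re, Complex.cos_ofReal_im, Complex.sin_ofReal_im,
    Complex.cosh_ofReal_im, Complex.sinh_ofReal_im]

private lemma sinh_im'_s3 (z : ℂ) :
    (Complex.sinh z).im = Real.cosh z.re * Real.sin z.im := by
  rw [sinh_decomp]
  simp [Complex.cos_ofReal_re, Complex.sin_ofReal_re, Complex.cosh_ofReal_re,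
    Complex.sinh_ofReal_re, Complex.cos_ofReal_im, Complex.sin_ofReal_im,
    Complex.cosh_ofReal_im, Complex.sinh_ofReal_im]

/-- `|cosh z| ≤ cosh (Re z)`. -/
private lemma abs_cosh_le (z : ℂ) : ‖Complex.cosh z‖ ≤ Real.cosh z.re := by
  have h1 : ‖Complex.cosh z‖ = Real.sqrt (Complex.normSq (Complex.cosh z)) :=
    Complex.norm_def _
  rw [h1]
  have h2 : Real.cosh z.re = Real.sqrt ((Real.cosh z.re) ^ 2) :=
    (Real.sqrt_sq (Real.cosh_pos _).le).symm
  rw [h2]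
  apply Real.sqrt_le_sqrt
  rw [Complex.normSq_apply, cosh_re', cosh_im']
  have hsc := Real.sin_sq_add_cos_sq z.im
  have hch := Real.cosh_sq_sub_sinh_sq z.re
  nlinarith [sq_nonneg (Real.sin z.im), sq_nonneg (Real.cos z.im)]

/-- `sinh |Re z| ≤ |cosh z|`. -/
private lemma sinh_le_abs_cosh (z : ℂ) : Real.sinh |z.re| ≤ ‖Complex.cosh z‖ := by
  have h1 : ‖Complex.cosh z‖ = Real.sqrt (Complex.normSq (Complex.cosh z)) :=
    Complex.norm_def _
  have h2 : Real.sinh |z.re| = Real.sqrt ((Real.sinh z.re) ^ 2) := by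
    rw [← Real.abs_sinh, Real.sqrt_sq_eq_abs]
  rw [h1, h2]
  apply Real.sqrt_le_sqrt
  rw [Complex.normSq_apply, cosh_re', cosh_im']
  have hsc := Real.sin_sq_add_cos_sq z.im
  have hch := Real.cosh_sq_sub_sinh_sq z.re
  nlinarith [sq_nonneg (Real.cos z.im), sq_nonneg (Real.sin z.im)]

set_option maxHeartbeats 2000000 in
/-- The tanh-sinh transformation `ψ(z) = tanh((π/2)·sinh z)` is Lipschitz on the strip
`D_d = {z : |Im z| < d}` whenever `0 < d < π/2`. -/
theorem tanh_sinh_lipschitz_on_strip (d : ℝ) (hd0 : 0 < d) (hd : d < π / 2) :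
    ∃ L : ℝ, 0 < L ∧ ∀ z w : ℂ, |z.im| < d → |w.im| < d →
      ‖Complex.tanh ((π / 2 : ℂ) * Complex.sinh z)
          - Complex.tanh ((π / 2 : ℂ) * Complex.sinh w)‖
        ≤ L * ‖z - w‖ := by
  have hπ : (0 : ℝ) < π := Real.pi_pos
  have hcosd : 0 < Real.cos d :=
    Real.cos_pos_of_mem_Ioo ⟨by linarith, hd⟩
  have hcosd1 : Real.cos d ≤ 1 := Real.cos_le_one d
  -- the map and its derivative
  set g : ℂ → ℂ := fun z => (π / 2 : ℂ) * Complex.sinh z with hgdef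
  set f : ℂ → ℂ := fun z => Complex.tanh (g z) with hfdef
  set c : ℂ → ℂ := fun z =>
    1 / (Complex.cosh (g z)) ^ 2 * ((π / 2 : ℂ) * Complex.cosh z) with hcdef
  -- basic facts about cos on the strip
  have hcosy : ∀ y : ℝ, |y| ≤ d → Real.cos d ≤ Real.cos y := by
    intro y hy
    have : Real.cos d ≤ Real.cos |y| :=
      Real.cos_le_cos_of_nonneg_of_le_pi (abs_nonneg y) (by linarith) hy
    rwa [Real.cos_abs] at this
  -- re and im of g z
  have hgre : ∀ z : ℂ, (g z).re = π / 2 * (Real.sinh z.re * Real.cos z.im) := by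
    intro z
    have : (g z) = ((π / 2 : ℝ) : ℂ) * Complex.sinh z := by
      rw [hgdef]; push_cast; ring_nf
    rw [this]
    simp [Complex.mul_re, Complex.ofReal_re, Complex.ofReal_im, sinh_re'_s3, sinh_im'_s3]
  have hgim : ∀ z : ℂ, (g z).im = π / 2 * (Real.cosh z.re * Real.sin z.im) := by
    intro z
    have : (g z) = ((π / 2 : ℝ) : ℂ) * Complex.sinh z := by
      rw [hgdef]; push_cast; ring_nf
    rw [this]
    simp [Complex.mul_im, Complex.ofReal_re, Complex.ofReal_im, sinh_re'_s3, sinh_im'_s3]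
  -- nonvanishing of cosh (g z) on the closed strip
  have hne : ∀ z : ℂ, |z.im| ≤ d → Complex.cosh (g z) ≠ 0 := by
    intro z hz h0
    have hre0 : Real.cosh (g z).re * Real.cos (g z).im = 0 := by
      rw [← cosh_re', h0]; simp
    have him0 : Real.sinh (g z).re * Real.sin (g z).im = 0 := by
      rw [← cosh_im', h0]; simp
    have hcoshpos : 0 < Real.cosh (g z).re := Real.cosh_pos _
    have hcos0 : Real.cos (g z).im = 0 := by
      rcases mul_eq_zero.1 hre0 with h | h
      · exact absurd h (ne_of_gt hcoshpos)
      · exact h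
    have hsin1 : Real.sin (g z).im ≠ 0 := by
      have := Real.sin_sq_add_cos_sq (g z).im
      intro h; rw [h, hcos0] at this; norm_num at this
    have hsinh0 : Real.sinh (g z).re = 0 := by
      rcases mul_eq_zero.1 him0 with h | h
      · exact h
      · exact absurd h hsin1
    -- hence z.re = 0
    have hx0 : z.re = 0 := by
      have h1 : (g z).re = 0 := by
        have := Real.sinh_eq_zero.1 hsinh0; exact this
      rw [hgre z] at h1
      have hcy : 0 < Real.cos z.im := lt_of_lt_of_le hcosd (hcosy _ hz)
      have : Real.sinh z.re = 0 := by
        rcases mul_eq_zero.1 h1 with h | h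
        · exfalso; have : π / 2 ≠ 0 := by positivity
          exact this h
        · rcases mul_eq_zero.1 h with h' | h'
          · exact h'
          · exact absurd h' (ne_of_gt hcy)
      exact Real.sinh_eq_zero.1 this
    -- then |(g z).im| < π/2, so cos (g z).im > 0, contradiction
    have hsiny : |Real.sin z.im| < 1 := by
      have hcy : Real.cos d ≤ Real.cos z.im := hcosy _ hz
      have := Real.sin_sq_add_cos_sq z.im
      have h1 : Real.sin z.im ^ 2 < 1 := by nlinarith
      nlinarith [abs_nonneg (Real.sin z.im), _root_.sq_abs (Real.sin z.im)]
    have him : |(g z).im| < π / 2 := by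
      rw [hgim z, hx0, Real.cosh_zero, one_mul, abs_mul,
        abs_of_pos (by positivity : (0:ℝ) < π / 2)]
      calc π / 2 * |Real.sin z.im| < π / 2 * 1 := by
            apply mul_lt_mul_of_pos_left hsiny (by positivity)
        _ = π / 2 := mul_one _
    have : 0 < Real.cos (g z).im :=
      Real.cos_pos_of_mem_Ioo ⟨neg_lt_of_abs_lt him, lt_of_abs_lt him⟩
    rw [hcos0] at this; exact lt_irrefl 0 this
  -- derivative of f
  have hderiv : ∀ z : ℂ, |z.im| ≤ d → HasDerivAt f (c z) z := by
    intro z hz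
    have hg' : HasDerivAt g ((π / 2 : ℂ) * Complex.cosh z) z :=
      (Complex.hasDerivAt_sinh z).const_mul _
    have hcne := hne z hz
    have htanh : HasDerivAt Complex.tanh (1 / (Complex.cosh (g z)) ^ 2) (g z) := by
      have h := (Complex.hasDerivAt_sinh (g z)).div (Complex.hasDerivAt_cosh (g z)) hcne
      have heq : (Complex.sinh / Complex.cosh) = Complex.tanh :=
        funext fun x => (Complex.tanh_eq_sinh_div_cosh x).symm
      rw [heq] at h
      have hval : Complex.cosh (g z) * Complex.cosh (g z)
          - Complex.sinh (g z) * Complex.sinh (g z) = 1 := by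
        have h2 := Complex.cosh_sq_sub_sinh_sq (g z)
        linear_combination h2
      rw [hval] at h
      exact h
    exact htanh.comp z hg'
  -- norm of the derivative
  have hnorm : ∀ z : ℂ, ‖c z‖ =
      π / 2 * ‖Complex.cosh z‖ / ‖Complex.cosh (g z)‖ ^ 2 := by
    intro z
    have habs : ‖(π / 2 : ℂ)‖ = π / 2 := by
      rw [show ((π / 2 : ℂ)) = ((π / 2 : ℝ) : ℂ) by push_cast; ring,
        Complex.norm_real, Real.norm_eq_abs, abs_of_pos (by positivity)]
    rw [hcdef]
    simp only [norm_mul, norm_div, norm_one, norm_pow, habs]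
    ring
  -- the compact part
  set K : Set ℂ := {z : ℂ | |z.re| ≤ 1 ∧ |z.im| ≤ d} with hKdef
  have hKc : IsCompact K := by
    apply Metric.isCompact_of_isClosed_isBounded
    · have h1 : IsClosed {z : ℂ | |z.re| ≤ 1} :=
        isClosed_le (continuous_abs.comp Complex.continuous_re) continuous_const
      have h2 : IsClosed {z : ℂ | |z.im| ≤ d} :=
        isClosed_le (continuous_abs.comp Complex.continuous_im) continuous_const
      exact h1.inter h2
    · apply (Metric.isBounded_closedBall (x := (0:ℂ)) (r := 1 + d)).subset
      intro z hz
      rw [Metric.mem_closedBall, dist_zero_right]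
      calc ‖z‖ ≤ |z.re| + |z.im| := Complex.norm_le_abs_re_add_abs_im z
        _ ≤ 1 + d := add_le_add hz.1 hz.2
  have hKne : K.Nonempty := ⟨0, by simp [hKdef, hd0.le]⟩
  set φ : ℂ → ℝ := fun z =>
    π / 2 * ‖Complex.cosh z‖ / ‖Complex.cosh (g z)‖ ^ 2 with hφdef
  have hφcont : ContinuousOn φ K := by
    apply ContinuousOn.div
    · exact (continuous_const.mul (continuous_norm.comp Complex.continuous_cosh)).continuousOn
    · exact ((continuous_norm.comp
        (Complex.continuous_cosh.comp (continuous_const.mul Complex.continuous_sinh))).pow 2).continuousOn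
    · intro z hz
      exact pow_ne_zero 2 (norm_ne_zero_iff.2 (hne z hz.2))
  obtain ⟨z₀, hz₀K, hz₀max⟩ := hKc.exists_isMaxOn hKne hφcont
  set M : ℝ := φ z₀ with hMdef
  set L : ℝ := max M (4 / (π * Real.cos d ^ 2)) with hLdef
  have hL2pos : 0 < 4 / (π * Real.cos d ^ 2) := by positivity
  have hLpos : 0 < L := lt_of_lt_of_le hL2pos (le_max_right _ _)
  -- the derivative bound on the closed strip
  have hbound : ∀ z : ℂ, |z.im| ≤ d → ‖c z‖ ≤ L := by
    intro z hz
    rw [hnorm z]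
    rcases le_or_gt |z.re| 1 with hx | hx
    · have hzK : z ∈ K := ⟨hx, hz⟩
      exact le_trans (hz₀max hzK) (le_max_left _ _)
    · -- tail estimate
      apply le_trans _ (le_max_right M _)
      have hs1 : (1 : ℝ) ≤ Real.sinh |z.re| := by
        have h1 : (1:ℝ) ≤ Real.sinh 1 := Real.self_le_sinh_iff.2 zero_le_one
        have h2 : Real.sinh 1 ≤ Real.sinh |z.re| := Real.sinh_le_sinh.2 hx.le
        linarith
      set s := Real.sinh |z.re| with hsdef
      set A := ‖Complex.cosh z‖ with hAdef
      set a := ‖Complex.cosh (g z)‖ with hadef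
      -- A ≤ 2 s
      have hA2s : A ≤ 2 * s := by
        have h1 : A ≤ Real.cosh z.re := abs_cosh_le z
        have h2 : Real.cosh z.re = Real.cosh |z.re| := (Real.cosh_abs z.re).symm
        have h3 : Real.cosh |z.re| ≤ s + 1 := by
          have := Real.cosh_sq_sub_sinh_sq |z.re|
          have hch : 0 < Real.cosh |z.re| := Real.cosh_pos _
          have hs0 : 0 ≤ s := by linarith
          nlinarith
        linarith
      -- a ≥ π/2 * s * cos d
      have hta : π / 2 * (s * Real.cos d) ≤ a := by
        have h1 : Real.sinh |(g z).re| ≤ a := sinh_le_abs_cosh (g z)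
        have h2 : π / 2 * (s * Real.cos d) ≤ |(g z).re| := by
          have hcy : Real.cos d ≤ Real.cos z.im := hcosy _ hz
          have hcy0 : 0 < Real.cos z.im := lt_of_lt_of_le hcosd hcy
          rw [hgre z, abs_mul, abs_mul, _root_.abs_of_pos (by positivity : (0:ℝ) < π/2),
            _root_.abs_of_pos hcy0]
          have hseq : s = |Real.sinh z.re| := by
            rw [hsdef, ← Real.abs_sinh]
          rw [hseq]
          have habs0 : (0:ℝ) ≤ |Real.sinh z.re| := abs_nonneg _
          nlinarith [mul_nonneg habs0 (sub_nonneg.2 hcy)]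
        have h3 : Real.sinh (π / 2 * (s * Real.cos d)) ≤ Real.sinh |(g z).re| :=
          Real.sinh_le_sinh.2 h2
        have h4 : π / 2 * (s * Real.cos d) ≤ Real.sinh (π / 2 * (s * Real.cos d)) :=
          Real.self_le_sinh_iff.2 (by positivity)
        linarith
      have ha0 : 0 < a := lt_of_lt_of_le (by positivity) hta
      have hA0 : 0 ≤ A := norm_nonneg _
      rw [div_le_div_iff₀ (by positivity) (by positivity)]
      -- π/2 * A * (π * cos d ^ 2) ≤ 4 * a ^ 2
      have key : π / 2 * (s * Real.cos d) * (π / 2 * (s * Real.cos d)) ≤ a ^ 2 := by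
        have := mul_le_mul hta hta (by positivity) (le_of_lt ha0)
        nlinarith
      have hint1 : 0 ≤ π ^ 2 * Real.cos d ^ 2 * (s * (s - 1)) := by
        apply mul_nonneg (by positivity)
        apply mul_nonneg (by linarith) (by linarith)
      have hint2 : 0 ≤ π ^ 2 * Real.cos d ^ 2 / 2 * (2 * s - A) := by
        apply mul_nonneg (by positivity) (by linarith)
      nlinarith [key, hint1, hint2]
  -- apply the mean value inequality on the convex closed strip
  refine ⟨L, hLpos, fun z w hz hw => ?_⟩
  set S : Set ℂ := {z : ℂ | |z.im| ≤ d} with hSdef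
  have hSconv : Convex ℝ S := by
    intro x hx y hy a b ha hb hab
    simp only [hSdef, Set.mem_setOf_eq] at *
    have : (a • x + b • y).im = a * x.im + b * y.im := by
      simp [Complex.add_im, Complex.smul_im]
    rw [this]
    calc |a * x.im + b * y.im| ≤ |a * x.im| + |b * y.im| := abs_add_le _ _
      _ = a * |x.im| + b * |y.im| := by
          rw [abs_mul, abs_mul, _root_.abs_of_nonneg ha, _root_.abs_of_nonneg hb]
      _ ≤ a * d + b * d := add_le_add
          (mul_le_mul_of_nonneg_left hx ha) (mul_le_mul_of_nonneg_left hy hb)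
      _ = d := by rw [← add_mul, hab, one_mul]
  have hmvt := hSconv.norm_image_sub_le_of_norm_hasDerivWithin_le
    (f := f) (f' := c)
    (fun x hx => (hderiv x hx).hasDerivWithinAt)
    (fun x hx => hbound x hx)
    (show w ∈ S from le_of_lt hw) (show z ∈ S from le_of_lt hz)
  simpa [hfdef, hgdef] using hmvt
end

section
/- (Lemma) For every d with 0 < d < π/2, the image ψ(D_d) of the strip D_d under the tanh-sinh transformation is a bounded subset of ℂ. -/
open Real Complex

set_option maxHeartbeats 1000000

lemma sinh_decomp' (w : ℂ) :
    Complex.sinh w = ⟨Real.sinh w.re * Real.cos w.im, Real.cosh w.re * Real.sin w.im⟩ := by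
  rw [← Complex.re_add_im w]
  push_cast [Complex.sinh_add, Complex.cosh_mul_I, Complex.sinh_mul_I]
  simp [Complex.ext_iff, Complex.sinh_ofReal_re, Complex.cos_ofReal_re,
    Complex.sin_ofReal_re, Complex.cosh_ofReal_re]

lemma cosh_decomp' (w : ℂ) :
    Complex.cosh w = ⟨Real.cosh w.re * Real.cos w.im, Real.sinh w.re * Real.sin w.im⟩ := by
  rw [← Complex.re_add_im w]
  push_cast [Complex.cosh_add, Complex.cosh_mul_I, Complex.sinh_mul_I]
  simp [Complex.ext_iff, Complex.sinh_ofReal_re, Complex.cos_ofReal_re,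
    Complex.sin_ofReal_re, Complex.cosh_ofReal_re]

lemma abs_sq_sinh' (w : ℂ) :
    ‖Complex.sinh w‖ ^ 2 = Real.sinh w.re ^ 2 + Real.sin w.im ^ 2 := by
  rw [Complex.sq_norm, sinh_decomp', Complex.normSq_mk]
  nlinarith [Real.sin_sq_add_cos_sq w.im, Real.cosh_sq w.re]

lemma abs_sq_cosh' (w : ℂ) :
    ‖Complex.cosh w‖ ^ 2 = Real.sinh w.re ^ 2 + Real.cos w.im ^ 2 := by
  rw [Complex.sq_norm, cosh_decomp', Complex.normSq_mk]
  nlinarith [Real.sin_sq_add_cos_sq w.im, Real.cosh_sq w.re]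

/-- For every `0 < d < π/2`, the image of the strip `D_d = {z : |Im z| < d}` under the
tanh-sinh transformation `ψ(z) = tanh((π/2)·sinh z)` is a bounded subset of `ℂ`. -/
theorem tanh_sinh_image_strip_bounded (d : ℝ) (hd0 : 0 < d) (hd : d < π / 2) :
    Bornology.IsBounded
      ((fun z : ℂ => Complex.tanh ((π / 2 : ℂ) * Complex.sinh z)) ''
        {z : ℂ | |z.im| < d}) := by
  have hpi : (0:ℝ) < π := Real.pi_pos
  have hdpi : d < π := by linarith
  set s : ℝ := Real.sin d with hs_def
  have hs0 : 0 < s := Real.sin_pos_of_pos_of_lt_pi hd0 hdpi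
  have hs1 : s < 1 := by
    have : s ≤ 1 := Real.sin_le_one d
    rcases lt_or_eq_of_le this with h | h
    · exact h
    · exfalso
      have := Real.cos_pos_of_mem_Ioo ⟨by linarith, hd⟩
      nlinarith [Real.sin_sq_add_cos_sq d]
  set K : ℝ := (1 + 1/s) / 2 with hK_def
  have hK1 : 1 < K := by
    rw [hK_def]
    have : 1 < 1/s := (one_lt_div hs0).mpr hs1
    linarith
  have hKs : K * s = (1 + s) / 2 := by
    rw [hK_def, div_mul_eq_mul_div, add_mul, one_div_mul_cancel hs0.ne', one_mul, add_comm]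
  set B : ℝ := π / 2 * ((1 + s) / 2) with hB_def
  have hB0 : 0 ≤ B := by positivity
  have hBlt : B < π / 2 := by
    have h1 : (1 + s) / 2 < 1 := by linarith
    calc B < π / 2 * 1 := by
            apply mul_lt_mul_of_pos_left h1; positivity
      _ = π / 2 := mul_one _
  set c : ℝ := Real.cos B with hc_def
  have hc0 : 0 < c := Real.cos_pos_of_mem_Ioo ⟨by linarith, hBlt⟩
  have hcosd : 0 < Real.cos d := Real.cos_pos_of_mem_Ioo ⟨by linarith, hd⟩
  set a : ℝ := π / 2 * Real.sqrt (K^2 - 1) * Real.cos d with ha_def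
  have hsq : 0 < Real.sqrt (K^2 - 1) := Real.sqrt_pos.mpr (by nlinarith)
  have ha0 : 0 < a := by positivity
  have hsa : 0 < Real.sinh a := Real.sinh_pos_iff.mpr ha0
  set m : ℝ := min (c^2) (Real.sinh a ^ 2) with hm_def
  have hm0 : 0 < m := lt_min (by positivity) (by positivity)
  set R : ℝ := Real.sqrt (1 + 1/m) with hR_def
  apply (Metric.isBounded_closedBall (x := (0:ℂ)) (r := R)).subset
  rintro _ ⟨z, hz, rfl⟩
  simp only [Metric.mem_closedBall, dist_zero_right]
  simp only [Set.mem_setOf_eq] at hz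
  set u : ℝ := z.re with hu_def
  set v : ℝ := z.im with hv_def
  set w : ℂ := (π / 2 : ℂ) * Complex.sinh z with hw_def
  have hwre : w.re = π / 2 * (Real.sinh u * Real.cos v) := by
    rw [hw_def, Complex.mul_re, sinh_decomp']
    push_cast
    simp
    rfl
  have hwim : w.im = π / 2 * (Real.cosh u * Real.sin v) := by
    rw [hw_def, Complex.mul_im, sinh_decomp']
    push_cast
    simp
    rfl
  -- |cos v| ≥ cos d, |sin v| ≤ sin d
  have hcosv : Real.cos d ≤ Real.cos v := by
    rw [← Real.cos_abs v]
    exact Real.cos_le_cos_of_nonneg_of_le_pi (abs_nonneg v) hdpi.le hz.le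
  have hsinv : |Real.sin v| ≤ s := by
    rw [abs_le]
    constructor
    · have := Real.sin_le_sin_of_le_of_le_pi_div_two (x := -d) (y := v)
        (by linarith) (by cases abs_lt.mp hz; linarith) (by cases abs_lt.mp hz; linarith)
      rw [Real.sin_neg] at this
      linarith
    · exact Real.sin_le_sin_of_le_of_le_pi_div_two
        (by cases abs_lt.mp hz; linarith) hd.le (by cases abs_lt.mp hz; linarith)
  -- key lower bound on the denominator
  have hlow : m ≤ Real.sinh w.re ^ 2 + Real.cos w.im ^ 2 := by
    rcases le_or_gt (Real.cosh u) K with hcase | hcase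
    · -- |w.im| ≤ B, so cos w.im ≥ c
      have him : |w.im| ≤ B := by
        rw [hwim, abs_mul, abs_mul]
        have h1 : |π / 2| = π / 2 := abs_of_pos (by positivity)
        have h2 : |Real.cosh u| = Real.cosh u := abs_of_pos (Real.cosh_pos u)
        rw [h1, h2, hB_def, ← hKs]
        have hcu : 0 < Real.cosh u := Real.cosh_pos u
        have : Real.cosh u * |Real.sin v| ≤ K * s := by
          apply mul_le_mul hcase hsinv (abs_nonneg _) (by linarith)
        nlinarith
      have hcw : c ≤ Real.cos w.im := by
        rw [← Real.cos_abs w.im, hc_def]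
        exact Real.cos_le_cos_of_nonneg_of_le_pi (abs_nonneg _) (by linarith) him
      have : c^2 ≤ Real.cos w.im ^ 2 := by nlinarith
      have hm' : m ≤ c^2 := min_le_left _ _
      nlinarith [sq_nonneg (Real.sinh w.re)]
    · -- |w.re| ≥ a, so sinh w.re ^ 2 ≥ sinh a ^ 2
      have hsinhu : Real.sqrt (K^2 - 1) ≤ |Real.sinh u| := by
        rw [← Real.sqrt_sq_eq_abs]
        apply Real.sqrt_le_sqrt
        nlinarith [Real.cosh_sq u, Real.cosh_pos u]
      have hre : a ≤ |w.re| := by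
        rw [hwre, abs_mul, abs_mul]
        have h1 : |π / 2| = π / 2 := abs_of_pos (by positivity)
        have h2 : |Real.cos v| = Real.cos v := abs_of_pos (by linarith)
        rw [h1, h2, ha_def]
        have : Real.sqrt (K^2 - 1) * Real.cos d ≤ |Real.sinh u| * Real.cos v := by
          apply mul_le_mul hsinhu hcosv hcosd.le (abs_nonneg _)
        nlinarith
      have hcosh : Real.cosh a ≤ Real.cosh w.re := by
        rw [Real.cosh_le_cosh]
        rwa [abs_of_pos ha0]
      have : Real.sinh a ^ 2 ≤ Real.sinh w.re ^ 2 := by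
        nlinarith [Real.cosh_sq a, Real.cosh_sq w.re, Real.cosh_pos a,
          Real.cosh_pos w.re]
      have hm' : m ≤ Real.sinh a ^ 2 := min_le_right _ _
      nlinarith [sq_nonneg (Real.cos w.im)]
  -- cosh w ≠ 0
  have hD0 : 0 < Real.sinh w.re ^ 2 + Real.cos w.im ^ 2 := lt_of_lt_of_le hm0 hlow
  have hcosh_ne : Complex.cosh w ≠ 0 := by
    intro h
    rw [← abs_sq_cosh' w, h] at hD0
    simp at hD0
  -- bound |tanh w|
  have habs : ‖Complex.tanh w‖ ^ 2 ≤ 1 + 1/m := by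
    rw [Complex.tanh_eq_sinh_div_cosh, norm_div, div_pow, abs_sq_sinh', abs_sq_cosh']
    rw [div_le_iff₀ hD0]
    have hsin1 : Real.sin w.im ^ 2 ≤ 1 := by
      nlinarith [Real.sin_sq_add_cos_sq w.im, sq_nonneg (Real.cos w.im)]
    have h1m : 0 < 1/m := by positivity
    have hDm : 1 ≤ (Real.sinh w.re ^ 2 + Real.cos w.im ^ 2) * (1/m) := by
      have h := mul_le_mul_of_nonneg_right hlow h1m.le
      rwa [mul_one_div, div_self hm0.ne'] at h
    nlinarith
  have : ‖Complex.tanh w‖ ≤ R := by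
    rw [hR_def]
    rw [Real.le_sqrt (norm_nonneg _)]
    · exact habs
    · have h1m : 0 < 1/m := one_div_pos.mpr hm0
      linarith
  exact this
end

section
/- For the integral I₁, the preimages of the excluded singularities are bounded away from the real axis: let 0 < h < k be real parameters and let F = {−3, 2k/h − 1, −2k/h − 1} ⊂ ℂ (each of these points of the transformed integrand's singular set lies outside [−1, 1] since k > h > 0). Then for any d₀ with 0 < d₀ < π/2, the set S = {z ∈ D_{d₀} : ψ(z) ∈ F} satisfies inf{|Im z| : z ∈ S} > 0. -/
open Real Complex

lemma sinh_reim (w : ℂ) : Complex.sinh w =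
    (Real.sinh w.re * Real.cos w.im : ℝ) + (Real.cosh w.re * Real.sin w.im : ℝ) * I := by
  conv_lhs => rw [← Complex.re_add_im w]
  rw [Complex.sinh_add, Complex.sinh_mul_I, Complex.cosh_mul_I]
  push_cast [Complex.ofReal_sinh, Complex.ofReal_cosh, Complex.ofReal_cos, Complex.ofReal_sin]
  ring

lemma cosh_reim (w : ℂ) : Complex.cosh w =
    (Real.cosh w.re * Real.cos w.im : ℝ) + (Real.sinh w.re * Real.sin w.im : ℝ) * I := by
  conv_lhs => rw [← Complex.re_add_im w]
  rw [Complex.cosh_add, Complex.sinh_mul_I, Complex.cosh_mul_I]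
  push_cast [Complex.ofReal_sinh, Complex.ofReal_cosh, Complex.ofReal_cos, Complex.ofReal_sin]
  ring

lemma tanh_real_key (w : ℂ) (v : ℝ) (hv : 1 < v ^ 2)
    (ht : Complex.tanh w = (v : ℂ)) :
    Real.cos w.im = 0 ∧ Real.sinh w.re ^ 2 * (v ^ 2 - 1) = 1 := by
  have hc : Complex.cosh w ≠ 0 := by
    intro h0
    rw [Complex.tanh_eq_sinh_div_cosh, h0, div_zero] at ht
    have : (v : ℝ) = 0 := by exact_mod_cast ht.symm
    nlinarith
  have hsc : Complex.sinh w = (v : ℂ) * Complex.cosh w := by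
    rw [Complex.tanh_eq_sinh_div_cosh, div_eq_iff hc] at ht
    exact ht
  rw [sinh_reim, cosh_reim] at hsc
  have hre : Real.sinh w.re * Real.cos w.im = v * (Real.cosh w.re * Real.cos w.im) := by
    have := congrArg Complex.re hsc
    simpa [Complex.sinh_ofReal_re, Complex.cos_ofReal_re] using this
  have him : Real.cosh w.re * Real.sin w.im = v * (Real.sinh w.re * Real.sin w.im) := by
    have := congrArg Complex.im hsc
    simpa [Complex.sinh_ofReal_re, Complex.sin_ofReal_re] using this
  have hcy : Real.cos w.im = 0 := by
    by_contra hcy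
    have h0 : (Real.sinh w.re - v * Real.cosh w.re) * Real.cos w.im = 0 := by
      linear_combination hre
    have h1 : Real.sinh w.re = v * Real.cosh w.re := by
      rcases mul_eq_zero.mp h0 with hq | hq
      · linarith
      · exact absurd hq hcy
    have hsq : Real.sinh w.re ^ 2 = v ^ 2 * Real.cosh w.re ^ 2 := by rw [h1]; ring
    have hid : Real.cosh w.re ^ 2 * (1 - v ^ 2) = 1 := by nlinarith [Real.cosh_sq w.re]
    have hc2 : 0 < Real.cosh w.re ^ 2 := by positivity
    nlinarith
  have hsy : Real.sin w.im ^ 2 = 1 := by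
    have := Real.sin_sq_add_cos_sq w.im
    nlinarith
  have hsy0 : Real.sin w.im ≠ 0 := by intro hq; rw [hq] at hsy; norm_num at hsy
  have h0 : (Real.cosh w.re - v * Real.sinh w.re) * Real.sin w.im = 0 := by
    linear_combination him
  have h2 : Real.cosh w.re = v * Real.sinh w.re := by
    rcases mul_eq_zero.mp h0 with hq | hq
    · linarith
    · exact absurd hq hsy0
  refine ⟨hcy, ?_⟩
  have h2sq : Real.cosh w.re ^ 2 = v ^ 2 * Real.sinh w.re ^ 2 := by rw [h2]; ring
  nlinarith [Real.cosh_sq w.re]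

set_option maxHeartbeats 1000000 in
/-- For the integral `I₁` with parameters `0 < h < k`, the preimages under the tanh-sinh map
`ψ(z) = tanh((π/2)·sinh z)` of the excluded singularities `−3`, `2k/h − 1`, `−2k/h − 1`
(each lying outside `[−1, 1]` since `k > h > 0`) inside the strip `D_{d₀}` are bounded away
from the real axis. -/
theorem tanh_sinh_I1_singularities_bounded_away (h k : ℝ) (hh : 0 < h) (hk : h < k)
    (d₀ : ℝ) (hd₀0 : 0 < d₀) (hd₀ : d₀ < π / 2) :
    ∃ c : ℝ, 0 < c ∧ ∀ z : ℂ, |z.im| < d₀ →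
      Complex.tanh ((π / 2 : ℂ) * Complex.sinh z)
          ∈ ({(-3 : ℂ), ((2 * k / h - 1 : ℝ) : ℂ), ((-(2 * k / h) - 1 : ℝ) : ℂ)} : Set ℂ) →
        c ≤ |z.im| := by
  have hr : 1 < k / h := by rw [lt_div_iff₀ hh]; linarith
  have hv₂1 : 1 < 2 * k / h - 1 := by rw [mul_div_assoc]; linarith
  obtain ⟨E, hE⟩ : ∃ E : ℝ, E = min 8 ((2 * k / h - 1) ^ 2 - 1) := ⟨_, rfl⟩
  have hE0 : 0 < E := by
    rw [hE]; apply lt_min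
    · norm_num
    · nlinarith
  obtain ⟨M, hM⟩ : ∃ M : ℝ, M = Real.arsinh (Real.sqrt (1 / E)) := ⟨_, rfl⟩
  have hM0 : 0 ≤ M := hM ▸ Real.arsinh_nonneg_iff.mpr (Real.sqrt_nonneg _)
  have hcd : 0 < Real.cos d₀ := Real.cos_pos_of_mem_Ioo ⟨by linarith, hd₀⟩
  obtain ⟨A, hA⟩ : ∃ A : ℝ, A = 2 / π * M / Real.cos d₀ := ⟨_, rfl⟩
  have hA0 : 0 ≤ A := by
    rw [hA]; exact div_nonneg (mul_nonneg (by positivity) hM0) hcd.le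
  have hs0 : (0 : ℝ) < Real.sqrt (1 + A ^ 2) := Real.sqrt_pos.mpr (by positivity)
  refine ⟨1 / Real.sqrt (1 + A ^ 2), by positivity, ?_⟩
  intro z hzim hmem
  obtain ⟨w, hw⟩ : ∃ w : ℂ, w = (π / 2 : ℂ) * Complex.sinh z := ⟨_, rfl⟩
  rw [← hw] at hmem
  have hkey : w = ((π / 2 * (Real.sinh z.re * Real.cos z.im) : ℝ) : ℂ) +
      ((π / 2 * (Real.cosh z.re * Real.sin z.im) : ℝ) : ℂ) * I := by
    rw [hw, sinh_reim z]
    push_cast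
    ring
  have hwre : w.re = π / 2 * (Real.sinh z.re * Real.cos z.im) := by
    rw [hkey, Complex.add_re, Complex.mul_re, Complex.ofReal_re, Complex.ofReal_re,
      Complex.ofReal_im, Complex.I_re, Complex.I_im]
    ring
  have hwim : w.im = π / 2 * (Real.cosh z.re * Real.sin z.im) := by
    rw [hkey, Complex.add_im, Complex.mul_im, Complex.ofReal_re, Complex.ofReal_im,
      Complex.ofReal_im, Complex.I_re, Complex.I_im]
    ring
  -- extract v
  obtain ⟨v, hveq, hv1, hvE⟩ : ∃ v : ℝ, Complex.tanh w = (v : ℝ) ∧ 1 < v ^ 2 ∧ E ≤ v ^ 2 - 1 := by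
    rcases hmem with h1 | h2 | h3
    · refine ⟨-3, by rw [h1]; norm_num, by norm_num, ?_⟩
      have hm := min_le_left (8 : ℝ) ((2 * k / h - 1) ^ 2 - 1)
      rw [← hE] at hm; linarith
    · refine ⟨2 * k / h - 1, by rw [h2], by nlinarith, ?_⟩
      have hm := min_le_right (8 : ℝ) ((2 * k / h - 1) ^ 2 - 1)
      rw [← hE] at hm; linarith
    · refine ⟨-(2 * k / h) - 1, by rw [h3], by nlinarith, ?_⟩
      have hm := min_le_right (8 : ℝ) ((2 * k / h - 1) ^ 2 - 1)
      rw [← hE] at hm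
      nlinarith
  obtain ⟨hcos0, hsinh2⟩ := tanh_real_key w v hv1 hveq
  -- bound |w.re|
  have hsq : Real.sinh w.re ^ 2 ≤ 1 / E := by
    rw [le_div_iff₀ hE0]
    nlinarith [sq_nonneg (Real.sinh w.re)]
  have habs : |Real.sinh w.re| ≤ Real.sqrt (1 / E) := by
    rw [← Real.sqrt_sq_eq_abs]
    exact Real.sqrt_le_sqrt hsq
  have hwreM : |w.re| ≤ M := by
    have hsle : Real.sinh |w.re| ≤ Real.sqrt (1 / E) := by
      rw [← Real.abs_sinh]; exact habs
    have h1 := Real.arsinh_le_arsinh.mpr hsle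
    rwa [Real.arsinh_sinh, ← hM] at h1
  -- bound sinh z.re
  have hcoszim : Real.cos d₀ ≤ Real.cos z.im := by
    rw [← Real.cos_abs z.im]
    exact Real.cos_le_cos_of_nonneg_of_le_pi (abs_nonneg _) (by linarith [Real.pi_pos]) hzim.le
  have hcoszim0 : 0 < Real.cos z.im := lt_of_lt_of_le hcd hcoszim
  have hsinhA : |Real.sinh z.re| ≤ A := by
    have h1 : |w.re| = π / 2 * (|Real.sinh z.re| * Real.cos z.im) := by
      rw [hwre, abs_mul, abs_mul, abs_of_pos Real.pi_div_two_pos, abs_of_pos hcoszim0]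
    have h2 : π / 2 * (|Real.sinh z.re| * Real.cos d₀) ≤ M := by
      calc π / 2 * (|Real.sinh z.re| * Real.cos d₀)
          ≤ π / 2 * (|Real.sinh z.re| * Real.cos z.im) := by
            apply mul_le_mul_of_nonneg_left _ Real.pi_div_two_pos.le
            exact mul_le_mul_of_nonneg_left hcoszim (abs_nonneg _)
        _ = |w.re| := h1.symm
        _ ≤ M := hwreM
    rw [hA, le_div_iff₀ hcd, div_mul_eq_mul_div, le_div_iff₀ Real.pi_pos]
    nlinarith [Real.pi_pos]
  have hcoshA : Real.cosh z.re ≤ Real.sqrt (1 + A ^ 2) := by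
    rw [← Real.sqrt_sq (Real.cosh_pos z.re).le]
    apply Real.sqrt_le_sqrt
    have h1 := Real.cosh_sq z.re
    have h2 : Real.sinh z.re ^ 2 ≤ A ^ 2 :=
      sq_le_sq' (by linarith [(abs_le.mp hsinhA).1]) (abs_le.mp hsinhA).2
    linarith
  -- |w.im| ≥ π/2
  have hwimge : π / 2 ≤ |w.im| := by
    rw [Real.cos_eq_zero_iff] at hcos0
    obtain ⟨n, hn⟩ := hcos0
    have h1 : (1 : ℝ) ≤ |2 * (n : ℝ) + 1| := by
      have hne : (2 * n + 1 : ℤ) ≠ 0 := by omega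
      have h2 : (1 : ℤ) ≤ |2 * n + 1| := Int.one_le_abs hne
      calc (1 : ℝ) = ((1 : ℤ) : ℝ) := by norm_num
        _ ≤ ((|2 * n + 1| : ℤ) : ℝ) := by exact_mod_cast h2
        _ = |2 * (n : ℝ) + 1| := by push_cast [Int.cast_abs]; norm_num
    rw [hn]
    have h3 : |(2 * (n:ℝ) + 1) * π / 2| = |2 * (n:ℝ) + 1| * π / 2 := by
      rw [abs_div, abs_mul, abs_of_pos Real.pi_pos]
      norm_num
    rw [h3]
    nlinarith [Real.pi_pos, h1]
  -- conclude
  have hsinge : 1 ≤ Real.cosh z.re * |Real.sin z.im| := by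
    have h1 : |w.im| = π / 2 * (Real.cosh z.re * |Real.sin z.im|) := by
      rw [hwim, abs_mul, abs_mul, abs_of_pos Real.pi_div_two_pos,
        abs_of_pos (Real.cosh_pos z.re)]
    rw [h1] at hwimge
    nlinarith [Real.pi_pos]
  have h2 : 1 ≤ Real.sqrt (1 + A ^ 2) * |Real.sin z.im| := by
    calc (1:ℝ) ≤ Real.cosh z.re * |Real.sin z.im| := hsinge
      _ ≤ Real.sqrt (1 + A ^ 2) * |Real.sin z.im| :=
        mul_le_mul_of_nonneg_right hcoshA (abs_nonneg _)
  calc 1 / Real.sqrt (1 + A ^ 2) ≤ |Real.sin z.im| := by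
        rw [div_le_iff₀ hs0]; linarith [mul_comm (Real.sqrt (1 + A ^ 2)) |Real.sin z.im|]
    _ ≤ |z.im| := Real.abs_sin_le_abs
end

section
/- (Main general theorem) Let g : ℂ → ℂ be analytic on ℂ except at a finite set F of singular points with F ∩ [−1, 1] = ∅ (so g is continuous on [−1, 1]), and let h : ℂ → ℂ and C₁ > 0 satisfy |h(z)| ≥ C₁·|√(1 − z²)| for all z in ψ(D_{d₀}) for every d₀ ∈ (0, π/2), with f = g/h analytic where defined. Then there exist d ∈ (0, π/2) and a constant C₂ > 0 such that g is analytic and bounded by C₂ on the closure of ψ(D_d), and consequently |f(z)| = |g(z)|/|h(z)| ≤ (C₂/C₁)·|1/√(1 − z²)| for all z ∈ ψ(D_d); i.e., f satisfies the hypotheses of the tanh-sinh convergence theorem with β = 1. -/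
open Real Complex

/-- The tanh-sinh change of variables `ψ(z) = tanh((π/2)·sinh z)`. -/
noncomputable def tsPsi (z : ℂ) : ℂ := Complex.tanh ((π / 2 : ℂ) * Complex.sinh z)

/-- The open horizontal strip `D_d = {z : |Im z| < d}`. -/
def tsStrip (d : ℝ) : Set ℂ := {z : ℂ | |z.im| < d}

lemma abs_cosh_ge_sinh_abs (w : ℂ) : Real.sinh |w.re| ≤ ‖Complex.cosh w‖ := by
  have hc : Complex.cosh w = (Complex.exp w + Complex.exp (-w)) / 2 := rfl
  have tri : ∀ a b : ℂ, ‖a‖ - ‖b‖ ≤ ‖a + b‖ := by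
    intro a b
    have h := norm_add_le (a + b) (-b)
    simp only [add_neg_cancel_right, norm_neg] at h
    linarith
  rw [hc, norm_div, Complex.norm_two]
  rcases le_total 0 w.re with h | h
  · rw [_root_.abs_of_nonneg h, Real.sinh_eq]
    have h1 := tri (Complex.exp w) (Complex.exp (-w))
    rw [Complex.norm_exp, Complex.norm_exp, neg_re] at h1
    linarith
  · rw [_root_.abs_of_nonpos h, Real.sinh_eq]
    simp only [neg_neg]
    have h1 := tri (Complex.exp (-w)) (Complex.exp w)
    rw [Complex.norm_exp, Complex.norm_exp, neg_re, add_comm] at h1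
    linarith

set_option maxHeartbeats 1600000 in
lemma tsPsi_key (ε : ℝ) (hε : 0 < ε) :
    ∃ d : ℝ, 0 < d ∧ d < π / 2 ∧ ∀ z ∈ tsStrip d,
      ∃ t : ℝ, t ∈ Set.Icc (-1:ℝ) 1 ∧ ‖tsPsi z - (t:ℂ)‖ ≤ ε := by
  obtain ⟨A, hAdef⟩ : ∃ A : ℝ, A = Real.arsinh (1/ε) := ⟨_, rfl⟩
  have hA0 : 0 ≤ A := hAdef ▸ Real.arsinh_nonneg_iff.2 (by positivity)
  obtain ⟨R, hRdef⟩ : ∃ R : ℝ, R = Real.arsinh (4*A/π + 1) := ⟨_, rfl⟩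
  have hR0 : 0 ≤ R := hRdef ▸ Real.arsinh_nonneg_iff.2 (by positivity)
  obtain ⟨B, hBdef⟩ : ∃ B : ℝ, B = π * Real.cosh R := ⟨_, rfl⟩
  have hB : 0 < B := hBdef ▸ mul_pos pi_pos (Real.cosh_pos R)
  obtain ⟨d, hddef⟩ : ∃ d : ℝ, d = min 1 (min ε 1 / B) := ⟨_, rfl⟩
  have hd0 : 0 < d := hddef ▸ lt_min one_pos (div_pos (lt_min hε one_pos) hB)
  have hd1 : d ≤ 1 := hddef ▸ min_le_left _ _
  have hdB : B * d ≤ min ε 1 := by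
    have h1 : d ≤ min ε 1 / B := hddef ▸ min_le_right _ _
    calc B * d ≤ B * (min ε 1 / B) := mul_le_mul_of_nonneg_left h1 hB.le
      _ = min ε 1 := by field_simp
  have hπ3 : (1:ℝ) ≤ π / 3 := by linarith [pi_gt_three]
  have hdpi : d < π / 2 := lt_of_le_of_lt hd1 (by linarith [pi_gt_three])
  refine ⟨d, hd0, hdpi, ?_⟩
  intro z hz
  obtain ⟨x, hxdef⟩ : ∃ x : ℝ, x = z.re := ⟨_, rfl⟩
  obtain ⟨y, hydef⟩ : ∃ y : ℝ, y = z.im := ⟨_, rfl⟩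
  have hy : |y| < d := hydef ▸ hz
  have hy1 : |y| ≤ 1 := hy.le.trans hd1
  have hcosy : (1/2 : ℝ) ≤ Real.cos y := by
    have h2 : Real.cos (π/3) ≤ Real.cos |y| :=
      Real.cos_le_cos_of_nonneg_of_le_pi (abs_nonneg y)
        (by linarith [pi_pos]) (hy1.trans hπ3)
    rw [Real.cos_pi_div_three, Real.cos_abs] at h2
    exact h2
  obtain ⟨u, hudef⟩ : ∃ u : ℝ, u = π/2 * Real.sinh x * Real.cos y := ⟨_, rfl⟩
  obtain ⟨v, hvdef⟩ : ∃ v : ℝ, v = π/2 * Real.cosh x * Real.sin y := ⟨_, rfl⟩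
  obtain ⟨w, hwdef⟩ : ∃ w : ℂ, w = (π / 2 : ℂ) * Complex.sinh z := ⟨_, rfl⟩
  have hzxy : z = (x:ℂ) + (y:ℂ)*I := by rw [hxdef, hydef]; exact (Complex.re_add_im z).symm
  have htspsi : tsPsi z = Complex.tanh w := by rw [hwdef]; rfl
  have h1 : w = (u:ℂ) + (v:ℂ)*I := by
    rw [hwdef, hzxy, hudef, hvdef, Complex.sinh_add, Complex.sinh_mul_I, Complex.cosh_mul_I,
      ← Complex.ofReal_sinh, ← Complex.ofReal_cosh, ← Complex.ofReal_sin, ← Complex.ofReal_cos]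
    push_cast
    ring
  have h3 : Complex.cosh w = ((Real.cosh u * Real.cos v : ℝ) : ℂ)
      + ((Real.sinh u * Real.sin v : ℝ) : ℂ)*I := by
    rw [h1, Complex.cosh_add, Complex.sinh_mul_I, Complex.cosh_mul_I,
      ← Complex.ofReal_sinh, ← Complex.ofReal_cosh, ← Complex.ofReal_sin, ← Complex.ofReal_cos]
    push_cast
    ring
  have hwre : w.re = u := by rw [h1]; simp
  -- the candidate point
  refine ⟨Real.tanh u, ?_, ?_⟩
  · rw [Set.mem_Icc, ← abs_le, Real.tanh_eq_sinh_div_cosh, abs_div, Real.abs_sinh,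
      _root_.abs_of_pos (Real.cosh_pos u), div_le_one (Real.cosh_pos u)]
    calc Real.sinh |u| ≤ Real.cosh |u| := (Real.sinh_lt_cosh _).le
      _ = Real.cosh u := Real.cosh_abs u
  · have hformula : ∀ _ : Complex.cosh w ≠ 0,
        ‖tsPsi z - (Real.tanh u : ℂ)‖ =
          |Real.sin v| / (‖Complex.cosh w‖ * Real.cosh u) := by
      intro hc
      have hcu : Complex.cosh (u:ℂ) ≠ 0 := by
        rw [← Complex.ofReal_cosh]
        exact_mod_cast (Real.cosh_pos u).ne'
      have hsub : w - (u:ℂ) = (v:ℂ) * I := by rw [h1]; ring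
      have hdiff : tsPsi z - (Real.tanh u : ℂ)
          = Complex.sin (v:ℂ) * I / (Complex.cosh w * Complex.cosh (u:ℂ)) := by
        rw [htspsi,Complex.ofReal_tanh, Complex.tanh_eq_sinh_div_cosh, Complex.tanh_eq_sinh_div_cosh,
          div_sub_div _ _ hc hcu, ← Complex.sinh_sub, hsub, Complex.sinh_mul_I]
      rw [hdiff, norm_div, norm_mul, norm_mul, Complex.norm_I, mul_one, ← Complex.ofReal_sin,
        Complex.norm_real, Real.norm_eq_abs, ← Complex.ofReal_cosh, Complex.norm_real, Real.norm_eq_abs,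
        _root_.abs_of_pos (Real.cosh_pos u)]
    rcases le_or_gt |x| R with hxR | hxR
    · -- central case
      have hvb : |v| ≤ B * d / 2 := by
        have hvabs : |v| = π/2 * Real.cosh x * |Real.sin y| := by
          rw [hvdef, abs_mul, _root_.abs_of_pos (by positivity : (0:ℝ) < π/2 * Real.cosh x)]
        rw [hvabs]
        have hcx : Real.cosh x ≤ Real.cosh R := by
          rw [Real.cosh_le_cosh]
          rwa [_root_.abs_of_nonneg hR0]
        have hs : |Real.sin y| ≤ d := (Real.abs_sin_le_abs).trans hy.le
        calc π/2 * Real.cosh x * |Real.sin y| ≤ π/2 * Real.cosh R * d := by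
              apply mul_le_mul _ hs (abs_nonneg _) (by positivity)
              nlinarith [Real.cosh_pos x, pi_pos]
          _ = B * d / 2 := by rw [hBdef]; ring
      have hv12 : |v| ≤ 1/2 := by
        have : B * d ≤ 1 := hdB.trans (min_le_right _ _)
        linarith
      have hcosv : (1/2:ℝ) ≤ Real.cos v := by
        have h2 : Real.cos (π/3) ≤ Real.cos |v| :=
          Real.cos_le_cos_of_nonneg_of_le_pi (abs_nonneg v)
            (by linarith [pi_pos]) (by linarith)
        rw [Real.cos_pi_div_three, Real.cos_abs] at h2
        exact h2
      have habs : (1/2:ℝ) ≤ ‖Complex.cosh w‖ := by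
        have hre : (Complex.cosh w).re = Real.cosh u * Real.cos v := by
          rw [h3]
          simp [Complex.add_re, Complex.mul_re]
          exact Or.inl (Complex.cos_ofReal_re v)
        have h4 := Complex.abs_re_le_norm (Complex.cosh w)
        rw [hre] at h4
        have h5 : Real.cosh u * Real.cos v ≤ |Real.cosh u * Real.cos v| := le_abs_self _
        nlinarith [Real.one_le_cosh u]
      have hc : Complex.cosh w ≠ 0 := by
        intro h0
        rw [h0, norm_zero] at habs
        linarith
      rw [hformula hc]
      have hlow : (1/2:ℝ) ≤ ‖Complex.cosh w‖ * Real.cosh u := by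
        nlinarith [Real.one_le_cosh u]
      have hnum : |Real.sin v| ≤ ε/2 := by
        have h9 : |Real.sin v| ≤ |v| := Real.abs_sin_le_abs
        have h10 : B * d ≤ ε := hdB.trans (min_le_left _ _)
        linarith
      have h11 : |Real.sin v| / (‖Complex.cosh w‖ * Real.cosh u) ≤ (ε/2)/(1/2) :=
        div_le_div₀ (by positivity) hnum (by norm_num) hlow
      linarith
    · -- tail case
      have hcy : 0 < Real.cos y := by linarith
      have huabs : |u| = π/2 * Real.sinh |x| * Real.cos y := by
        rw [hudef, abs_mul, abs_mul, _root_.abs_of_pos (by positivity : (0:ℝ) < π/2),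
          _root_.abs_of_pos hcy, Real.abs_sinh]
      have hsR : Real.sinh R = 4*A/π + 1 := by rw [hRdef]; exact Real.sinh_arsinh _
      have huA : A ≤ |u| := by
        rw [huabs]
        have h6 : Real.sinh R ≤ Real.sinh |x| := Real.sinh_le_sinh.2 hxR.le
        have hsx : (0:ℝ) ≤ Real.sinh |x| := by
          rw [← Real.sinh_zero]
          exact Real.sinh_le_sinh.2 (abs_nonneg x)
        have h7 : π/2 * Real.sinh R * (1/2) ≤ π/2 * Real.sinh |x| * Real.cos y := by
          apply mul_le_mul _ hcosy (by norm_num) (mul_nonneg (by positivity) hsx)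
          exact mul_le_mul_of_nonneg_left h6 (by positivity)
        have h8 : π/2 * Real.sinh R * (1/2) = A + π/4 := by rw [hsR]; field_simp; ring
        linarith
      have hsu : 1/ε ≤ Real.sinh |u| := by
        have h12 := Real.sinh_le_sinh.2 huA
        rw [hAdef, Real.sinh_arsinh] at h12
        exact h12
      have habs : 1/ε ≤ ‖Complex.cosh w‖ := by
        have := abs_cosh_ge_sinh_abs w
        rw [hwre] at this
        linarith
      have hc : Complex.cosh w ≠ 0 := by
        intro h0
        rw [h0, norm_zero] at habs
        have : (0:ℝ) < 1/ε := by positivity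
        linarith
      rw [hformula hc]
      have hlow : 1/ε ≤ ‖Complex.cosh w‖ * Real.cosh u := by
        nlinarith [Real.one_le_cosh u, (by positivity : (0:ℝ) < 1/ε)]
      have h11 : |Real.sin v| / (‖Complex.cosh w‖ * Real.cosh u) ≤ 1 / (1/ε) :=
        div_le_div₀ (by norm_num) (Real.abs_sin_le_one v) (by positivity) hlow
      rwa [one_div_one_div] at h11

lemma complex_tanh_ne_one (w : ℂ) : Complex.tanh w ≠ 1 := by
  intro hw
  rw [Complex.tanh_eq_sinh_div_cosh] at hw
  by_cases hc : Complex.cosh w = 0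
  · rw [hc, div_zero] at hw; exact one_ne_zero hw.symm
  · rw [div_eq_one_iff_eq hc] at hw
    have h2 := Complex.cosh_sub_sinh w
    rw [hw, sub_self] at h2
    exact Complex.exp_ne_zero _ h2.symm

lemma complex_tanh_ne_neg_one (w : ℂ) : Complex.tanh w ≠ -1 := by
  intro hw
  rw [Complex.tanh_eq_sinh_div_cosh] at hw
  by_cases hc : Complex.cosh w = 0
  · rw [hc, div_zero] at hw
    exact (by norm_num : (0:ℂ) ≠ -1) hw
  · rw [div_eq_iff hc] at hw
    have h2 := Complex.cosh_add_sinh w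
    rw [hw] at h2
    have h3 : (0:ℂ) = Complex.exp w := by rw [← h2]; ring
    exact Complex.exp_ne_zero w h3.symm

/-- Main general theorem: if `g` is analytic away from a finite singular set `F` disjoint from
`[−1, 1]`, and `h` satisfies `|h(z)| ≥ C₁·|√(1 − z²)|` on `ψ(D_{d₀})` for every
`d₀ ∈ (0, π/2)`, with `f = g/h` analytic where defined, then there exist `d ∈ (0, π/2)` and
`C₂ > 0` such that `g` is analytic and bounded by `C₂` on the closure of `ψ(D_d)`, and
`|f(z)| ≤ (C₂/C₁)·|1/√(1 − z²)|` on `ψ(D_d)`. -/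
theorem tanh_sinh_general (g h : ℂ → ℂ) (F : Finset ℂ)
    (hg : AnalyticOn ℂ g ((↑F : Set ℂ)ᶜ))
    (hF : ∀ x ∈ F, x ∉ (fun t : ℝ => (t : ℂ)) '' Set.Icc (-1 : ℝ) 1)
    (C₁ : ℝ) (hC₁ : 0 < C₁)
    (hh : ∀ d₀ : ℝ, 0 < d₀ → d₀ < π / 2 → ∀ z ∈ tsPsi '' tsStrip d₀,
      C₁ * ‖(1 - z ^ 2) ^ (1 / 2 : ℂ)‖ ≤ ‖h z‖)
    (hf : AnalyticOn ℂ (fun z => g z / h z) {z : ℂ | z ∉ (↑F : Set ℂ) ∧ h z ≠ 0}) :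
    ∃ d : ℝ, 0 < d ∧ d < π / 2 ∧ ∃ C₂ : ℝ, 0 < C₂ ∧
      AnalyticOn ℂ g (closure (tsPsi '' tsStrip d)) ∧
      (∀ z ∈ closure (tsPsi '' tsStrip d), ‖g z‖ ≤ C₂) ∧
      ∀ z ∈ tsPsi '' tsStrip d,
        ‖g z / h z‖ ≤ (C₂ / C₁) * ‖1 / (1 - z ^ 2) ^ (1 / 2 : ℂ)‖ := by
  set S : Set ℂ := (fun t : ℝ => (t : ℂ)) '' Set.Icc (-1 : ℝ) 1 with hSdef
  have hScomp : IsCompact S := isCompact_Icc.image Complex.continuous_ofReal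
  have hSclosed : IsClosed S := hScomp.isClosed
  have hSne : S.Nonempty := ⟨(0:ℂ), ⟨(0:ℝ), by norm_num, by norm_num⟩⟩
  obtain ⟨ε, hε0, hεF⟩ : ∃ ε : ℝ, 0 < ε ∧ ∀ x ∈ F, ε ≤ Metric.infDist x S := by
    rcases F.eq_empty_or_nonempty with hFe | hFne
    · exact ⟨1, one_pos, by simp [hFe]⟩
    · obtain ⟨x₀, hx₀, hmin⟩ := F.exists_min_image (fun x => Metric.infDist x S) hFne
      exact ⟨Metric.infDist x₀ S,
        (hSclosed.notMem_iff_infDist_pos hSne).1 (hF x₀ hx₀), fun x hx => hmin x hx⟩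
  obtain ⟨d, hd0, hdπ, hclose⟩ := tsPsi_key (ε/2) (half_pos hε0)
  set K : Set ℂ := {z : ℂ | Metric.infDist z S ≤ ε/2} with hKdef
  have hKclosed : IsClosed K := isClosed_le (Metric.continuous_infDist_pt S) continuous_const
  have hKbdd : Bornology.IsBounded K := by
    apply Bornology.IsBounded.subset (Metric.isBounded_closedBall (x := (0:ℂ)) (r := ε/2 + 2))
    intro z hz
    have hz' : Metric.infDist z S < ε/2 + 1 := lt_of_le_of_lt hz (by linarith)
    obtain ⟨p, hpS, hp⟩ := (Metric.infDist_lt_iff hSne).1 hz'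
    obtain ⟨t, ht, rfl⟩ := hpS
    have h1 : dist ((t:ℂ)) (0:ℂ) ≤ 1 := by
      rw [Complex.dist_eq, sub_zero, Complex.norm_real, Real.norm_eq_abs]
      rw [Set.mem_Icc] at ht
      rw [abs_le]; exact ht
    have h2 := dist_triangle z ((t:ℂ)) (0:ℂ)
    rw [Metric.mem_closedBall]
    linarith
  have hKcomp : IsCompact K := Metric.isCompact_of_isClosed_isBounded hKclosed hKbdd
  have hKF : K ⊆ ((↑F : Set ℂ)ᶜ) := by
    intro z hz hzF
    have h1 := hεF z hzF
    have h2 : Metric.infDist z S ≤ ε/2 := hz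
    linarith
  have himg : tsPsi '' tsStrip d ⊆ K := by
    rintro _ ⟨z, hz, rfl⟩
    obtain ⟨t, htmem, htd⟩ := hclose z hz
    have htS : ((t:ℝ) : ℂ) ∈ S := ⟨t, htmem, rfl⟩
    refine le_trans (Metric.infDist_le_dist_of_mem htS) ?_
    rw [Complex.dist_eq]
    exact htd
  have hclK : closure (tsPsi '' tsStrip d) ⊆ K := closure_minimal himg hKclosed
  obtain ⟨C, hC⟩ := hKcomp.exists_bound_of_continuousOn (hg.mono hKF).continuousOn
  refine ⟨d, hd0, hdπ, max C 1, lt_of_lt_of_le one_pos (le_max_right _ _),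
    hg.mono (hclK.trans hKF), ?_, ?_⟩
  · intro z hz
    have := hC z (hclK hz)
    exact this.trans (le_max_left _ _)
  · intro z hz
    have hgz : ‖g z‖ ≤ max C 1 := by
      have := hC z (hclK (subset_closure hz))
      exact this.trans (le_max_left _ _)
    by_cases h1z : (1 : ℂ) - z ^ 2 = 0
    · exfalso
      obtain ⟨z₀, _, rfl⟩ := hz
      have hsq : (tsPsi z₀ - 1) * (tsPsi z₀ + 1) = 0 := by linear_combination -h1z
      rcases mul_eq_zero.1 hsq with h2 | h2
      · exact complex_tanh_ne_one _ (sub_eq_zero.1 h2)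
      · exact complex_tanh_ne_neg_one _ (eq_neg_of_add_eq_zero_left h2)
    · have hcp : ((1:ℂ) - z ^ 2) ^ (1/2 : ℂ) ≠ 0 := by
        rw [Ne, Complex.cpow_eq_zero_iff]
        intro hcon
        exact h1z hcon.1
      have hA0 : 0 < ‖((1:ℂ) - z ^ 2) ^ (1/2 : ℂ)‖ :=
        norm_pos_iff.mpr hcp
      have hhz := hh d hd0 hdπ z hz
      by_cases hzero : h z = 0
      · rw [hzero, div_zero, norm_zero]
        positivity
      · rw [norm_div]
        have hden : 0 < C₁ * ‖((1:ℂ) - z ^ 2) ^ (1/2 : ℂ)‖ := mul_pos hC₁ hA0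
        have step : ‖g z‖ / ‖h z‖
            ≤ (max C 1) / (C₁ * ‖((1:ℂ) - z ^ 2) ^ (1/2 : ℂ)‖) :=
          div_le_div₀ (le_trans zero_le_one (le_max_right C 1)) hgz hden hhz
        rw [norm_div, norm_one]
        calc ‖g z‖ / ‖h z‖
            ≤ (max C 1) / (C₁ * ‖((1:ℂ) - z ^ 2) ^ (1/2 : ℂ)‖) := step
          _ = (max C 1) / C₁ * (1 / ‖((1:ℂ) - z ^ 2) ^ (1/2 : ℂ)‖) := by
              rw [mul_one_div, div_div]
end
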